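/- Suppose M is a matrix over ℂ whose rows are indexed by all ways of partitioning 2d coordinates into d pairs with chosen orientations consistent with EO evaluations, such that for every nontrivial domain-symmetric EO signature h of arity 2d (viewed as a vector h of its values), Mh ≠ 0. Concretely: if h : {0,1}^{2d} → ℂ is an EO signature with h(ᾱ) = h(α) for all α, and the result of adding d disequality self-loops to h (in every possible way) always gives 0, then h is identically zero. -/

import Mathlib

open Finset

namespace Stmt12

def inc (m : ℕ) (k : Fin (2*m)) : Fin (2*m+2) := ⟨k, by omega⟩

def i0 (m : ℕ) : Fin (2*m+2) := ⟨2*m, by omega⟩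

def j0 (m : ℕ) : Fin (2*m+2) := ⟨2*m+1, by omega⟩

lemma i0_ne_j0 (m : ℕ) : i0 m ≠ j0 m := by simp [i0, j0, Fin.ext_iff]

def ext (m : ℕ) (y : Fin (2*m) → Bool) (a b : Bool) : Fin (2*m+2) → Bool :=
  fun k => if hk : (k : ℕ) < 2*m then y ⟨k, hk⟩ else if (k : ℕ) = 2*m then a else b

def res (m : ℕ) (α : Fin (2*m+2) → Bool) : Fin (2*m) → Bool := fun k => α (inc m k)

lemma ext_inc (m : ℕ) (y : Fin (2*m) → Bool) (a b : Bool) (k : Fin (2*m)) :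
    ext m y a b (inc m k) = y k := by
  simp [ext, inc, k.isLt]

lemma ext_i0 (m : ℕ) (y : Fin (2*m) → Bool) (a b : Bool) : ext m y a b (i0 m) = a := by
  simp [ext, i0]

lemma ext_j0 (m : ℕ) (y : Fin (2*m) → Bool) (a b : Bool) : ext m y a b (j0 m) = b := by
  simp [ext, j0]

lemma ext_res (m : ℕ) (α : Fin (2*m+2) → Bool) :
    ext m (res m α) (α (i0 m)) (α (j0 m)) = α := by
  funext k
  rcases lt_trichotomy (k : ℕ) (2*m) with hk | hk | hk
  · have : k = inc m ⟨k, hk⟩ := by simp [inc, Fin.ext_iff]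
    rw [this, ext_inc]; rfl
  · have : k = i0 m := by simp [i0, Fin.ext_iff, hk]
    rw [this, ext_i0]
  · have : k = j0 m := by
      have := k.isLt; simp [j0, Fin.ext_iff]; omega
    rw [this, ext_j0]

lemma ext_not (m : ℕ) (y : Fin (2*m) → Bool) (a b : Bool) :
    (fun k => !(ext m y a b k)) = ext m (fun k => !(y k)) (!a) (!b) := by
  funext k
  simp only [ext]
  split_ifs <;> rfl

lemma ext_swap (m : ℕ) (y : Fin (2*m) → Bool) (a b : Bool) :
    (fun k => ext m y a b (Equiv.swap (i0 m) (j0 m) k)) = ext m y b a := by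
  funext k
  rcases lt_trichotomy (k : ℕ) (2*m) with hk | hk | hk
  · have h1 : k ≠ i0 m := by simp [i0, Fin.ext_iff]; omega
    have h2 : k ≠ j0 m := by simp [j0, Fin.ext_iff]; omega
    rw [Equiv.swap_apply_of_ne_of_ne h1 h2]
    have : k = inc m ⟨k, hk⟩ := by simp [inc, Fin.ext_iff]
    rw [this, ext_inc, ext_inc]
  · have : k = i0 m := by simp [i0, Fin.ext_iff, hk]
    rw [this, Equiv.swap_apply_left, ext_j0, ext_i0]
  · have : k = j0 m := by
      have := k.isLt; simp [j0, Fin.ext_iff]; omega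
    rw [this, Equiv.swap_apply_right, ext_i0, ext_j0]

lemma weight_ext (m : ℕ) (y : Fin (2*m) → Bool) (a b : Bool) :
    (univ.filter fun k => ext m y a b k = true).card
      = (univ.filter fun k => y k = true).card
        + (if a = true then 1 else 0) + (if b = true then 1 else 0) := by
  rw [card_filter, card_filter]
  rw [Fin.sum_univ_castSucc (n := 2*m+1), Fin.sum_univ_castSucc (n := 2*m)]
  have h1 : ∀ i : Fin (2*m),
      ext m y a b (Fin.castSucc (Fin.castSucc i)) = y i := by
    intro i
    have : (Fin.castSucc (Fin.castSucc i) : Fin (2*m+2)) = inc m i := by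
      simp [inc, Fin.ext_iff]
    rw [this, ext_inc]
  have h2 : (Fin.castSucc (Fin.last (2*m)) : Fin (2*m+2)) = i0 m := by
    simp [i0, Fin.ext_iff]
  have h3 : (Fin.last (2*m+1) : Fin (2*m+2)) = j0 m := by
    simp [j0, Fin.ext_iff]
  simp only [h1, h2, h3, ext_i0, ext_j0]
def liftP (m : ℕ) (q : Fin (2*m) → Fin (2*m)) : Fin (2*m+2) → Fin (2*m+2) :=
  fun k => if hk : (k : ℕ) < 2*m then inc m (q ⟨k, hk⟩)
    else if (k : ℕ) = 2*m then j0 m else i0 m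

lemma liftP_inc (m : ℕ) (q : Fin (2*m) → Fin (2*m)) (k : Fin (2*m)) :
    liftP m q (inc m k) = inc m (q k) := by
  simp [liftP, inc, k.isLt]

lemma liftP_i0 (m : ℕ) (q : Fin (2*m) → Fin (2*m)) : liftP m q (i0 m) = j0 m := by
  simp [liftP, i0]

lemma liftP_j0 (m : ℕ) (q : Fin (2*m) → Fin (2*m)) : liftP m q (j0 m) = i0 m := by
  simp [liftP, j0]

lemma liftP_invol (m : ℕ) (q : Fin (2*m) → Fin (2*m)) (hq : Function.Involutive q) :
    Function.Involutive (liftP m q) := by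
  intro k
  rcases lt_trichotomy (k : ℕ) (2*m) with hk | hk | hk
  · have : k = inc m ⟨k, hk⟩ := by simp [inc, Fin.ext_iff]
    rw [this, liftP_inc, liftP_inc, hq]
  · have : k = i0 m := by simp [i0, Fin.ext_iff, hk]
    rw [this, liftP_i0, liftP_j0]
  · have : k = j0 m := by have := k.isLt; simp [j0, Fin.ext_iff]; omega
    rw [this, liftP_j0, liftP_i0]

lemma liftP_fpf (m : ℕ) (q : Fin (2*m) → Fin (2*m)) (hq : ∀ i, q i ≠ i) :
    ∀ k, liftP m q k ≠ k := by
  intro k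
  rcases lt_trichotomy (k : ℕ) (2*m) with hk | hk | hk
  · have hk2 : k = inc m ⟨k, hk⟩ := by simp [inc, Fin.ext_iff]
    rw [hk2, liftP_inc]
    intro hcon
    exact hq ⟨k, hk⟩ (by simpa [inc, Fin.ext_iff] using hcon)
  · have : k = i0 m := by simp [i0, Fin.ext_iff, hk]
    rw [this, liftP_i0]; simp [i0, j0, Fin.ext_iff]
  · have : k = j0 m := by have := k.isLt; simp [j0, Fin.ext_iff]; omega
    rw [this, liftP_j0]; simp [i0, j0, Fin.ext_iff]

lemma part (m : ℕ) (h : (Fin (2*m+2) → Bool) → ℂ)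
    (q : Fin (2*m) → Fin (2*m)) (a b : Bool) (hab : b = !a) :
    ∑ α ∈ (univ.filter (fun α : Fin (2*m+2) → Bool => ∀ k, α (liftP m q k) = !(α k))).filter
        (fun α => α (i0 m) = a), h α
    = ∑ y ∈ univ.filter (fun y : Fin (2*m) → Bool => ∀ k, y (q k) = !(y k)),
        h (ext m y a b) := by
  subst hab
  refine Finset.sum_nbij' (res m) (fun y => ext m y a (!a)) ?_ ?_ ?_ ?_ ?_
  · intro α hα
    simp only [mem_filter, mem_univ, true_and] at hα ⊢
    intro k
    have := hα.1 (inc m k)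
    rw [liftP_inc] at this
    exact this
  · intro y hy
    simp only [mem_filter, mem_univ, true_and] at hy ⊢
    refine ⟨?_, ext_i0 m y a (!a)⟩
    intro k
    rcases lt_trichotomy (k : ℕ) (2*m) with hk | hk | hk
    · have : k = inc m ⟨k, hk⟩ := by simp [inc, Fin.ext_iff]
      rw [this, liftP_inc, ext_inc, ext_inc, hy]
    · have : k = i0 m := by simp [i0, Fin.ext_iff, hk]
      rw [this, liftP_i0, ext_j0, ext_i0]
    · have : k = j0 m := by have := k.isLt; simp [j0, Fin.ext_iff]; omega
      rw [this, liftP_j0, ext_i0, ext_j0, Bool.not_not]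
  · intro α hα
    simp only [mem_filter, mem_univ, true_and] at hα
    have h1 : α (j0 m) = !a := by
      have := hα.1 (i0 m)
      rw [liftP_i0, hα.2] at this
      exact this
    conv_rhs => rw [← ext_res m α]
    rw [hα.2, h1]
  · intro y hy
    funext k
    exact ext_inc m y a (!a) k
  · intro α hα
    simp only [mem_filter, mem_univ, true_and] at hα
    have h1 : α (j0 m) = !a := by
      have := hα.1 (i0 m)
      rw [liftP_i0, hα.2] at this
      exact this
    congr 1
    conv_lhs => rw [← ext_res m α]
    rw [hα.2, h1]

lemma sum_alt (m : ℕ) (h : (Fin (2*m+2) → Bool) → ℂ)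
    (q : Fin (2*m) → Fin (2*m)) :
    ∑ α ∈ univ.filter (fun α : Fin (2*m+2) → Bool => ∀ k, α (liftP m q k) = !(α k)), h α
    = ∑ y ∈ univ.filter (fun y : Fin (2*m) → Bool => ∀ k, y (q k) = !(y k)),
        (h (ext m y false true) + h (ext m y true false)) := by
  rw [← Finset.sum_filter_add_sum_filter_not
      (univ.filter (fun α : Fin (2*m+2) → Bool => ∀ k, α (liftP m q k) = !(α k)))
      (fun α => α (i0 m) = false), Finset.sum_add_distrib]
  congr 1
  · exact part m h q false true rfl
  · rw [← part m h q true false rfl]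
    apply Finset.sum_congr
    · apply Finset.filter_congr
      intro α _
      simp
    · intro _ _; rfl

lemma permW (n : ℕ) (π : Equiv.Perm (Fin n)) (α : Fin n → Bool) :
    (univ.filter fun k => α (π k) = true).card
      = (univ.filter fun k => α k = true).card := by
  refine Finset.card_nbij' π π.symm ?_ ?_ ?_ ?_ <;> intro x hx <;>
    simp only [coe_filter, coe_univ, Set.mem_setOf_eq, Set.mem_univ, mem_coe, mem_filter, mem_univ, true_and, Equiv.apply_symm_apply,
      Equiv.symm_apply_apply] at hx ⊢ <;> simpa using hx

lemma permZero (n : ℕ) (h : (Fin n → Bool) → ℂ) (π : Equiv.Perm (Fin n))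
    (hzero : ∀ p : Fin n → Fin n, Function.Involutive p → (∀ i, p i ≠ i) →
      ∑ α ∈ univ.filter (fun α : Fin n → Bool => ∀ i, α (p i) = !(α i)), h α = 0)
    (p : Fin n → Fin n) (hp : Function.Involutive p) (hpf : ∀ i, p i ≠ i) :
    ∑ α ∈ univ.filter (fun α : Fin n → Bool => ∀ i, α (p i) = !(α i)),
      h (fun k => α (π k)) = 0 := by
  have key : ∑ α ∈ univ.filter (fun α : Fin n → Bool => ∀ i, α (p i) = !(α i)),
      h (fun k => α (π k))
      = ∑ β ∈ univ.filter (fun β : Fin n → Bool =>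
          ∀ i, β (π.symm (p (π i))) = !(β i)), h β := by
    refine Finset.sum_nbij' (fun α => fun k => α (π k)) (fun β => fun k => β (π.symm k))
      ?_ ?_ ?_ ?_ ?_
    · intro α hα
      simp only [mem_filter, mem_univ, true_and] at hα ⊢
      intro i
      simpa using hα (π i)
    · intro β hβ
      simp only [mem_filter, mem_univ, true_and] at hβ ⊢
      intro i
      simpa using hβ (π.symm i)
    · intro α _; funext k; simp
    · intro β _; funext k; simp
    · intro α _; rfl
  rw [key]
  refine hzero _ ?_ ?_
  · intro k; simp [hp (π k)]
  · intro k hcon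
    exact hpf (π k) (by simpa using congrArg π hcon)

theorem main (d : ℕ) : ∀ h : (Fin (2*d) → Bool) → ℂ,
    (∀ α, h α ≠ 0 → (univ.filter (fun i => α i = true)).card = d) →
    (∀ α, h (fun i => !(α i)) = h α) →
    (∀ p : Fin (2*d) → Fin (2*d), Function.Involutive p → (∀ i, p i ≠ i) →
      ∑ α ∈ univ.filter (fun α : Fin (2*d) → Bool => ∀ i, α (p i) = !(α i)), h α = 0) →
    ∀ α, h α = 0 := by
  induction d with
  | zero =>
    intro h _ _ hzero α
    have h0 := hzero id (fun _ => rfl) (fun i => i.elim0)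
    rw [Finset.filter_true_of_mem (fun α _ => fun i => i.elim0)] at h0
    have hs : ∑ β ∈ (univ : Finset (Fin (2*0) → Bool)), h β = h α :=
      Finset.sum_eq_single_of_mem α (mem_univ α)
        (fun b _ hb => absurd (funext fun i => i.elim0 : b = α) hb)
    rw [← hs]
    exact h0
  | succ m IH =>
    intro h hEO hDsym hzero
    -- Step 1: swap relation at the last two coordinates
    have swapLast : ∀ h₁ : (Fin (2*m+2) → Bool) → ℂ,
        (∀ α, h₁ α ≠ 0 → (univ.filter (fun i : Fin (2*m+2) => α i = true)).card = m+1) →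
        (∀ α, h₁ (fun i => !(α i)) = h₁ α) →
        (∀ p : Fin (2*m+2) → Fin (2*m+2), Function.Involutive p → (∀ i, p i ≠ i) →
          ∑ α ∈ univ.filter (fun α : Fin (2*m+2) → Bool => ∀ i, α (p i) = !(α i)),
            h₁ α = 0) →
        ∀ α : Fin (2*m+2) → Bool, α (i0 m) ≠ α (j0 m) →
          h₁ α + h₁ (fun k => α (Equiv.swap (i0 m) (j0 m) k)) = 0 := by
      intro h₁ hEO₁ hDsym₁ hzero₁
      have key : ∀ y : Fin (2*m) → Bool,
          h₁ (ext m y false true) + h₁ (ext m y true false) = 0 := by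
        refine IH (fun y => h₁ (ext m y false true) + h₁ (ext m y true false)) ?_ ?_ ?_
        · intro y hy
          have hy' : h₁ (ext m y false true) + h₁ (ext m y true false) ≠ 0 := hy
          have hcase : h₁ (ext m y false true) ≠ 0 ∨ h₁ (ext m y true false) ≠ 0 := by
            by_contra hcon
            push_neg at hcon
            rw [hcon.1, hcon.2, add_zero] at hy'
            exact hy' rfl
          rcases hcase with hc | hc
          · have hw := hEO₁ _ hc
            rw [weight_ext] at hw
            simp only [if_pos, if_neg, Bool.false_eq_true, not_false_iff, reduceIte] at hw
            omega
          · have hw := hEO₁ _ hc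
            rw [weight_ext] at hw
            simp only [if_pos, if_neg, Bool.false_eq_true, not_false_iff, reduceIte] at hw
            omega
        · intro y
          show h₁ (ext m (fun i => !(y i)) false true) + h₁ (ext m (fun i => !(y i)) true false)
            = h₁ (ext m y false true) + h₁ (ext m y true false)
          have e1 : (fun k => !(ext m y true false k)) = ext m (fun k => !(y k)) false true := by
            rw [ext_not]; norm_num
          have e2 : (fun k => !(ext m y false true k)) = ext m (fun k => !(y k)) true false := by
            rw [ext_not]; norm_num
          rw [← e1, ← e2, hDsym₁, hDsym₁]
          ring
        · intro q hq hqf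
          rw [← sum_alt m h₁ q]
          exact hzero₁ (liftP m q) (liftP_invol m q hq) (liftP_fpf m q hqf)
      intro α hα
      cases hc : α (i0 m) with
      | false =>
        have hj : α (j0 m) = true := by
          cases hb : α (j0 m)
          · exact absurd (hc.trans hb.symm) hα
          · rfl
        have e1 : ext m (res m α) false true = α := by
          have := ext_res m α
          rw [hc, hj] at this
          exact this
        have e2 : (fun k => α (Equiv.swap (i0 m) (j0 m) k)) = ext m (res m α) true false := by
          conv_lhs => rw [← e1]
          rw [ext_swap]
        have hk := key (res m α)
        rw [e1] at hk
        rw [e2]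
        exact hk
      | true =>
        have hj : α (j0 m) = false := by
          cases hb : α (j0 m)
          · rfl
          · exact absurd (hc.trans hb.symm) hα
        have e1 : ext m (res m α) true false = α := by
          have := ext_res m α
          rw [hc, hj] at this
          exact this
        have e2 : (fun k => α (Equiv.swap (i0 m) (j0 m) k)) = ext m (res m α) false true := by
          conv_lhs => rw [← e1]
          rw [ext_swap]
        have hk := key (res m α)
        rw [e1] at hk
        rw [e2]
        linear_combination hk
    -- Step 2: general swap relation
    have swapRel : ∀ (i j : Fin (2*m+2)), i ≠ j → ∀ α : Fin (2*m+2) → Bool,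
        α i ≠ α j → h α + h (fun k => α (Equiv.swap i j k)) = 0 := by
      intro i j hij α hαij
      obtain ⟨π', hπi, hπj⟩ : ∃ π' : Equiv.Perm (Fin (2*m+2)),
          π' (i0 m) = i ∧ π' (j0 m) = j := by
        refine ⟨(Equiv.swap (i0 m) i).trans
          (Equiv.swap ((Equiv.swap (i0 m) i) (j0 m)) j), ?_, ?_⟩
        · show Equiv.swap ((Equiv.swap (i0 m) i) (j0 m)) j ((Equiv.swap (i0 m) i) (i0 m)) = i
          rw [Equiv.swap_apply_left]
          apply Equiv.swap_apply_of_ne_of_ne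
          · intro hcon
            have h2 : (Equiv.swap (i0 m) i) i = j0 m := by
              have h3 := congrArg (Equiv.swap (i0 m) i) hcon
              rw [Equiv.swap_apply_self] at h3
              exact h3
            rw [Equiv.swap_apply_right] at h2
            exact i0_ne_j0 m h2
          · exact hij
        · show Equiv.swap ((Equiv.swap (i0 m) i) (j0 m)) j ((Equiv.swap (i0 m) i) (j0 m)) = j
          exact Equiv.swap_apply_left _ _
      have hg := swapLast (fun β => h (fun k => β (π'.symm k)))
        (fun β hβ => by
          have hw := hEO (fun k => β (π'.symm k)) hβ
          have hw' : (univ.filter (fun k : Fin (2*m+2) => β (π'.symm k) = true)).card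
              = m + 1 := hw
          rw [← permW (2*m+2) π'.symm β]
          exact hw')
        (fun β => hDsym (fun k => β (π'.symm k)))
        (fun p hp hpf => permZero (2*m+2) h π'.symm hzero p hp hpf)
        (fun k => α (π' k))
        (by
          show α (π' (i0 m)) ≠ α (π' (j0 m))
          rw [hπi, hπj]; exact hαij)
      have hg' : h (fun k => α (π' (π'.symm k)))
          + h (fun k => α (π' (Equiv.swap (i0 m) (j0 m) (π'.symm k)))) = 0 := hg
      have r1 : (fun k : Fin (2*(m+1)) => α (π' (π'.symm k))) = α := by
        funext k; rw [Equiv.apply_symm_apply]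
      have r2 : (fun k : Fin (2*(m+1)) => α (π' (Equiv.swap (i0 m) (j0 m) (π'.symm k))))
          = (fun k : Fin (2*(m+1)) => α (Equiv.swap i j k)) := by
        funext k
        have hs := Equiv.swap_apply_apply π' (i0 m) (j0 m)
        rw [hπi, hπj] at hs
        rw [hs]
        simp [Equiv.Perm.mul_apply, Equiv.Perm.inv_def]
      rw [r1, r2] at hg'
      exact hg'
    -- Step 3: conclude
    intro α
    by_contra hα
    have hw := hEO α hα
    have hw' : (univ.filter (fun i : Fin (2*m+2) => α i = true)).card = m + 1 := hw
    rcases Nat.eq_zero_or_pos m with hm | hm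
    · -- arity 2 case
      subst hm
      have hkall : ∀ k : Fin (2*0+2), k = i0 0 ∨ k = j0 0 := by
        intro k
        have := k.isLt
        rcases Nat.lt_succ_iff_lt_or_eq.mp this with h' | h'
        · left; rw [Fin.ext_iff]; show (k : ℕ) = 2*0; omega
        · right; simp [j0, Fin.ext_iff]; omega
      by_cases hne : α (i0 0) = α (j0 0)
      · cases hb : α (i0 0) with
        | false =>
          have hemp : (univ.filter (fun i : Fin (2*0+2) => α i = true)) = ∅ := by
            apply Finset.filter_false_of_mem
            intro x _
            rcases hkall x with hx | hx
            · subst hx; rw [hb]; exact Bool.noConfusion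
            · subst hx; rw [← hne, hb]; exact Bool.noConfusion
          rw [hemp, Finset.card_empty] at hw'
          exact Nat.noConfusion hw'
        | true =>
          have hfull : (univ.filter (fun i : Fin (2*0+2) => α i = true)) = univ := by
            apply Finset.filter_true_of_mem
            intro x _
            rcases hkall x with hx | hx
            · subst hx; exact hb
            · subst hx; rw [← hne]; exact hb
          rw [hfull, Finset.card_fin] at hw'
          exact absurd hw' (by omega)
      · have hopp1 : α (j0 0) = !(α (i0 0)) := by
          cases h1 : α (i0 0)
          · cases h2 : α (j0 0)
            · exact absurd (h1.trans h2.symm) hne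
            · rfl
          · cases h2 : α (j0 0)
            · rfl
            · exact absurd (h1.trans h2.symm) hne
        have hopp2 : α (i0 0) = !(α (j0 0)) := by
          rw [hopp1, Bool.not_not]
        have hs := swapRel (i0 0) (j0 0) (i0_ne_j0 0) α hne
        have hflip : (fun k : Fin (2*(0+1)) => α (Equiv.swap (i0 0) (j0 0) k))
            = fun k : Fin (2*(0+1)) => !(α k) := by
          funext k
          rcases hkall k with hk | hk
          · subst hk; rw [Equiv.swap_apply_left]; exact hopp1
          · subst hk; rw [Equiv.swap_apply_right]; exact hopp2
        rw [hflip, hDsym] at hs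
        exact hα (by linear_combination hs / 2)
    · -- m ≥ 1
      obtain ⟨i, hi⟩ := Finset.card_pos.mp
        (by rw [hw']; omega :
          0 < (univ.filter (fun i : Fin (2*m+2) => α i = true)).card)
      rw [mem_filter] at hi
      have hi2 : α i = true := hi.2
      have htot := Finset.card_filter_add_card_filter_not
        (s := (univ : Finset (Fin (2*m+2)))) (p := fun k => α k = true)
      rw [Finset.card_univ, Fintype.card_fin] at htot
      have hz2 : 1 < (univ.filter (fun k : Fin (2*m+2) => ¬(α k = true))).card := by
        omega
      obtain ⟨j, hj, k, hk, hjk⟩ := Finset.one_lt_card.mp hz2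
      rw [mem_filter] at hj hk
      have hj2 : α j = false := by
        cases hb : α j
        · rfl
        · exact absurd hb hj.2
      have hk2 : α k = false := by
        cases hb : α k
        · rfl
        · exact absurd hb hk.2
      have hij : i ≠ j := fun hcon => by rw [hcon, hj2] at hi2; exact Bool.noConfusion hi2
      have hik : i ≠ k := fun hcon => by rw [hcon, hk2] at hi2; exact Bool.noConfusion hi2
      have e1 := swapRel i j hij α (by rw [hi2, hj2]; simp)
      have e4 := swapRel i k hik α (by rw [hi2, hk2]; simp)
      have hα1j : α (Equiv.swap i j j) = true := by rw [Equiv.swap_apply_right]; exact hi2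
      have hα1k : α (Equiv.swap i j k) = false := by
        rw [Equiv.swap_apply_of_ne_of_ne (Ne.symm hik) (Ne.symm hjk)]; exact hk2
      have e2 := swapRel j k hjk (fun x => α (Equiv.swap i j x))
        (by
          show α (Equiv.swap i j j) ≠ α (Equiv.swap i j k)
          rw [hα1j, hα1k]; simp)
      have e2' : h (fun x => α (Equiv.swap i j x))
          + h (fun y => α (Equiv.swap i j (Equiv.swap j k y))) = 0 := e2
      have e3 : (fun y : Fin (2*(m+1)) => α (Equiv.swap i j (Equiv.swap j k y)))
          = (fun y : Fin (2*(m+1)) => α (Equiv.swap i k y)) := by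
        funext x
        by_cases hxi : x = i
        · rw [hxi]
          have t1 : Equiv.swap j k i = i := Equiv.swap_apply_of_ne_of_ne hij hik
          have t2 : Equiv.swap i j i = j := Equiv.swap_apply_left i j
          have t3 : Equiv.swap i k i = k := Equiv.swap_apply_left i k
          rw [t1, t2, t3, hj2, hk2]
        · by_cases hxj : x = j
          · rw [hxj]
            have t1 : Equiv.swap j k j = k := Equiv.swap_apply_left j k
            have t2 : Equiv.swap i j k = k :=
              Equiv.swap_apply_of_ne_of_ne (Ne.symm hik) (Ne.symm hjk)
            have t3 : Equiv.swap i k j = j :=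
              Equiv.swap_apply_of_ne_of_ne (Ne.symm hij) hjk
            rw [t1, t2, t3, hj2, hk2]
          · by_cases hxk : x = k
            · rw [hxk]
              have t1 : Equiv.swap j k k = j := Equiv.swap_apply_right j k
              have t2 : Equiv.swap i j j = i := Equiv.swap_apply_right i j
              have t3 : Equiv.swap i k k = i := Equiv.swap_apply_right i k
              rw [t1, t2, t3]
            · have t1 : Equiv.swap j k x = x := Equiv.swap_apply_of_ne_of_ne hxj hxk
              have t2 : Equiv.swap i j x = x := Equiv.swap_apply_of_ne_of_ne hxi hxj
              have t3 : Equiv.swap i k x = x := Equiv.swap_apply_of_ne_of_ne hxi hxk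
              rw [t1, t2, t3]
      rw [e3] at e2'
      exact hα (by linear_combination (e1 + e4 - e2') / 2)

end Stmt12

/-- A nontrivial domain-symmetric EO signature has some nonzero full contraction:
if for every fixed-point-free pairing p the sum of h over all assignments alternating
on each pair vanishes, then h is identically zero. -/
theorem stmt_12 (d : ℕ) (h : (Fin (2 * d) → Bool) → ℂ)
    (hEO : ∀ α, h α ≠ 0 → (Finset.univ.filter (fun i => α i = true)).card = d)
    (hDsym : ∀ α, h (fun i => !(α i)) = h α)
    (hzero : ∀ p : Fin (2 * d) → Fin (2 * d), Function.Involutive p → (∀ i, p i ≠ i) →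
      ∑ α ∈ Finset.univ.filter (fun α : Fin (2 * d) → Bool => ∀ i, α (p i) = !(α i)),
        h α = 0) :
    ∀ α, h α = 0 :=
  Stmt12.main d h hEO hDsym hzero
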